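/- arXiv:2105.12758 — 2 statements merged into one kernel-verified Lean document; each statement's English description precedes it below -/
import Mathlib

section
/- Let Π be an orthogonal projection and ρ a density operator with p := Tr[Πρ] > 0. Then (1/2)‖ρ − ΠρΠ/p‖₁ ≤ √(1 − p), where ‖·‖₁ is the trace norm (gentle measurement lemma for projections). -/
open ComplexOrder

/-- The square root of a positive semidefinite matrix, as `Matrix.PosSemidef.sqrt` was defined
in the older Mathlib (removed since). -/
noncomputable def posSemidefSqrt {n : Type*} [Fintype n] [DecidableEq n]
    {A : Matrix n n ℂ} (hA : A.PosSemidef) : Matrix n n ℂ :=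
  (hA.isHermitian.eigenvectorUnitary : Matrix n n ℂ) *
    Matrix.diagonal ((↑) ∘ (√·) ∘ hA.isHermitian.eigenvalues) *
    (star hA.isHermitian.eigenvectorUnitary : Matrix n n ℂ)

/-- The trace norm `‖A‖₁ = Tr[√(AᴴA)]` of a complex matrix. -/
noncomputable def traceNorm {n : Type*} [Fintype n] [DecidableEq n]
    (A : Matrix n n ℂ) : ℝ :=
  ((posSemidefSqrt (Matrix.posSemidef_conjTranspose_mul_self A)).trace).re

section helpers
variable {n : Type*} [Fintype n] [DecidableEq n]

open scoped MatrixOrder in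
lemma posSemidefSqrt_eq_cfc {A : Matrix n n ℂ} (hA : A.PosSemidef) :
    posSemidefSqrt hA = CFC.sqrt A := by
  rw [CFC.sqrt_eq_cfc, cfc_nnreal_eq_real _ A, hA.1.cfc_eq]
  rw [Matrix.IsHermitian.cfc, Unitary.conjStarAlgAut_apply]
  unfold posSemidefSqrt
  congr 3
  funext i
  simp only [Function.comp, Real.coe_sqrt, Real.coe_toNNReal _ (hA.eigenvalues_nonneg i)]
  rfl

open scoped MatrixOrder in
lemma posSemidefSqrt_posSemidef {A : Matrix n n ℂ} (hA : A.PosSemidef) :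
    (posSemidefSqrt hA).PosSemidef := by
  rw [posSemidefSqrt_eq_cfc]
  exact Matrix.nonneg_iff_posSemidef.mp (CFC.sqrt_nonneg A)

open scoped MatrixOrder in
lemma posSemidefSqrt_mul_self {A : Matrix n n ℂ} (hA : A.PosSemidef) :
    posSemidefSqrt hA * posSemidefSqrt hA = A := by
  rw [posSemidefSqrt_eq_cfc]
  exact CFC.sqrt_mul_sqrt_self A hA.nonneg

open scoped MatrixOrder in
lemma my_eq_sqrt_of_sq_eq {A B : Matrix n n ℂ} (hB : B.PosSemidef) (hA : A.PosSemidef)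
    (h : B ^ 2 = A) : B = posSemidefSqrt hA := by
  rw [posSemidefSqrt_eq_cfc]
  exact (CFC.sqrt_unique (by rw [← sq]; exact h) hB.nonneg).symm

lemma mySign_mul_self (x : ℝ) : Real.sign x * x = |x| := by
  rcases lt_trichotomy x 0 with h|h|h
  · rw [Real.sign_of_neg h, abs_of_neg h]; ring
  · simp [h]
  · rw [Real.sign_of_pos h, abs_of_pos h]; ring

lemma exists_dual {Δ : Matrix n n ℂ} (hΔ : Δ.IsHermitian) :
    ∃ Q : Matrix n n ℂ, Q.IsHermitian ∧ (1 - Q * Q).PosSemidef ∧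
      traceNorm Δ = ((Q * Δ).trace).re := by
  set U : Matrix n n ℂ := (hΔ.eigenvectorUnitary : Matrix n n ℂ) with hU
  have hUU : star U * U = 1 := Matrix.UnitaryGroup.star_mul_self _
  have hUU' : U * star U = 1 := Matrix.mem_unitaryGroup_iff.mp hΔ.eigenvectorUnitary.2
  set d : n → ℝ := hΔ.eigenvalues with hd
  have key : ∀ f g : n → ℂ, (U * Matrix.diagonal f * star U) * (U * Matrix.diagonal g * star U)
      = U * Matrix.diagonal (fun i => f i * g i) * star U := by
    intro f g
    calc (U * Matrix.diagonal f * star U) * (U * Matrix.diagonal g * star U)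
        = U * (Matrix.diagonal f * ((star U * U) * Matrix.diagonal g)) * star U := by
          simp only [mul_assoc]
      _ = U * Matrix.diagonal (fun i => f i * g i) * star U := by
          rw [hUU, one_mul, Matrix.diagonal_mul_diagonal]
  have herm : ∀ f : n → ℝ, (U * Matrix.diagonal (fun i => (f i : ℂ)) * star U).IsHermitian := by
    intro f
    have hst : (star fun i => ((f i : ℂ))) = fun i => ((f i : ℂ)) :=
      funext fun i => by simp [Pi.star_apply, Complex.conj_ofReal]
    unfold Matrix.IsHermitian
    simp only [Matrix.conjTranspose_mul, Matrix.diagonal_conjTranspose,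
      Matrix.conjTranspose_conjTranspose, Matrix.star_eq_conjTranspose, hst, mul_assoc]
  have psd : ∀ f : n → ℝ, (∀ i, 0 ≤ f i) →
      (U * Matrix.diagonal (fun i => (f i : ℂ)) * star U).PosSemidef := by
    intro f hf
    have h1 : (Matrix.diagonal (fun i => (f i : ℂ))).PosSemidef :=
      Matrix.posSemidef_diagonal_iff.mpr fun i => Complex.zero_le_real.mpr (hf i)
    simpa [Matrix.star_eq_conjTranspose] using h1.mul_mul_conjTranspose_same U
  have spec : Δ = U * Matrix.diagonal (fun i => (d i : ℂ)) * star U := by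
    exact hΔ.spectral_theorem
  set Q : Matrix n n ℂ := U * Matrix.diagonal (fun i => (Real.sign (d i) : ℂ)) * star U with hQ
  have habs : (fun i => (Real.sign (d i) : ℂ) * (d i : ℂ)) = fun i => ((|d i| : ℝ) : ℂ) :=
    funext fun i => by rw [← Complex.ofReal_mul, mySign_mul_self]
  have hQΔ : Q * Δ = U * Matrix.diagonal (fun i => ((|d i| : ℝ) : ℂ)) * star U := by
    rw [hQ]; nth_rewrite 1 [spec]
    rw [key, habs]
  have hQΔpsd : (Q * Δ).PosSemidef := hQΔ ▸ psd _ (fun i => abs_nonneg _)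
  have hsq : (Q * Δ) ^ 2 = Δ.conjTranspose * Δ := by
    have h2 : (fun i => ((|d i| : ℝ) : ℂ) * ((|d i| : ℝ) : ℂ)) = fun i => (d i : ℂ) * (d i : ℂ) :=
      funext fun i => by rw [← Complex.ofReal_mul, ← Complex.ofReal_mul, abs_mul_abs_self]
    rw [hΔ.eq, pow_two, hQΔ, key, h2]
    nth_rewrite 1 [spec]
    nth_rewrite 1 [spec]
    rw [key]
  refine ⟨Q, herm _, ?_, ?_⟩
  · have h1 : (1 : Matrix n n ℂ) = U * Matrix.diagonal (fun _ => ((1:ℝ) : ℂ)) * star U := by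
      simp [hUU']
    rw [hQ, key, h1]
    have h3 : U * Matrix.diagonal (fun _ => ((1:ℝ):ℂ)) * star U
        - U * Matrix.diagonal (fun i => ((Real.sign (d i) : ℂ) * (Real.sign (d i) : ℂ))) * star U
        = U * Matrix.diagonal (fun i => ((1 - Real.sign (d i) * Real.sign (d i) : ℝ) : ℂ)) * star U := by
      rw [← Matrix.sub_mul, ← Matrix.mul_sub, Matrix.diagonal_sub]
      congr 2
      funext i
      push_cast; ring
    rw [h3]
    refine psd _ fun i => ?_
    rcases lt_trichotomy (d i) 0 with h|h|h
    · rw [Real.sign_of_neg h]; norm_num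
    · simp [h]
    · rw [Real.sign_of_pos h]; norm_num
  · have heq := my_eq_sqrt_of_sq_eq hQΔpsd (Matrix.posSemidef_conjTranspose_mul_self Δ) hsq
    unfold traceNorm
    rw [← heq]

lemma trace_psd_re_nonneg (M : Matrix n n ℂ) (hM : M.PosSemidef) : 0 ≤ M.trace.re := by
  have h : ∀ i, 0 ≤ M i i := fun i => by
    exact hM.diag_nonneg
  have : (0:ℂ) ≤ M.trace := Finset.sum_nonneg fun i _ => h i
  exact (Complex.le_def.mp this).1

lemma trace_CS (X Y : Matrix n n ℂ) :
    ((X.conjTranspose * Y).trace).re ≤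
      Real.sqrt ((X.conjTranspose * X).trace).re * Real.sqrt ((Y.conjTranspose * Y).trace).re := by
  classical
  let v : Matrix n n ℂ → EuclideanSpace ℂ (n × n) :=
    fun M => (WithLp.equiv 2 _).symm (fun q : n × n => M q.1 q.2)
  have hinner : ∀ M N : Matrix n n ℂ,
      (inner ℂ (v M) (v N) : ℂ) = (M.conjTranspose * N).trace := by
    intro M N
    rw [Matrix.trace]
    simp only [PiLp.inner_apply, RCLike.inner_apply, Matrix.diag_apply, Matrix.mul_apply,
      Matrix.conjTranspose_apply, v, WithLp.equiv_symm_apply]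
    rw [Fintype.sum_prod_type]
    exact Finset.sum_comm.trans
      (Finset.sum_congr rfl fun _ _ => Finset.sum_congr rfl fun _ _ => mul_comm _ _)
  have hnorm : ∀ M : Matrix n n ℂ,
      Real.sqrt ((M.conjTranspose * M).trace).re = ‖v M‖ := by
    intro M
    rw [← hinner, ← RCLike.re_to_complex, inner_self_eq_norm_sq (𝕜 := ℂ),
      Real.sqrt_sq (norm_nonneg _)]
  rw [← hinner, hnorm, hnorm, ← RCLike.re_to_complex]
  exact re_inner_le_norm (𝕜 := ℂ) _ _

end helpers

set_option maxHeartbeats 1000000 in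
/-- gentle measurement lemma for projections: for an orthogonal
projection `P` and a density operator `ρ` with `p := Tr[P ρ] > 0`,
`(1/2) ‖ρ − PρP / p‖₁ ≤ √(1 − p)`. -/
theorem gentle_measurement
    {n : Type*} [Fintype n] [DecidableEq n]
    (P ρ : Matrix n n ℂ)
    (hidem : P * P = P) (hsa : P.conjTranspose = P)
    (hρ : ρ.PosSemidef) (htr : ρ.trace = 1)
    (p : ℝ) (hp : p = ((P * ρ).trace).re) (hppos : 0 < p) :
    (1 / 2) * traceNorm (ρ - ((p : ℂ)⁻¹ • (P * ρ * P))) ≤ Real.sqrt (1 - p) := by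
  have hρH : ρ.conjTranspose = ρ := hρ.1
  -- the trace of P * ρ is the real number p
  have htrP : (P * ρ).trace = (p : ℂ) := by
    have hstar : star ((P * ρ).trace) = (P * ρ).trace := by
      conv_lhs => rw [← Matrix.trace_conjTranspose, Matrix.conjTranspose_mul, hρH, hsa]
      rw [Matrix.trace_mul_comm]
    rw [Complex.star_def] at hstar
    have him : ((P * ρ).trace).im = 0 := (Complex.conj_eq_iff_im.mp hstar)
    exact Complex.ext (by rw [← hp, Complex.ofReal_re]) (by rw [him, Complex.ofReal_im])
  -- p ≤ 1
  have hp1 : p ≤ 1 := by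
    have hRH : ((1 : Matrix n n ℂ) - P).conjTranspose = (1 : Matrix n n ℂ) - P := by
      rw [Matrix.conjTranspose_sub, Matrix.conjTranspose_one, hsa]
    have hpsd : (((1 : Matrix n n ℂ) - P) * ρ * ((1 : Matrix n n ℂ) - P)).PosSemidef := by
      have := hρ.mul_mul_conjTranspose_same ((1 : Matrix n n ℂ) - P)
      rwa [hRH] at this
    have htr2 : (((1 : Matrix n n ℂ) - P) * ρ * ((1 : Matrix n n ℂ) - P)).trace
        = 1 - (p : ℂ) := by
      rw [Matrix.trace_mul_cycle]
      have hRR : ((1 : Matrix n n ℂ) - P) * ((1 : Matrix n n ℂ) - P)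
          = (1 : Matrix n n ℂ) - P := by
        rw [Matrix.mul_sub, mul_one, Matrix.sub_mul, one_mul, hidem]
        abel
      rw [hRR, Matrix.sub_mul, Matrix.trace_sub, one_mul, htr, htrP]
    have := trace_psd_re_nonneg _ hpsd
    rw [htr2] at this
    simp only [Complex.sub_re, Complex.one_re, Complex.ofReal_re] at this
    linarith
  -- square root of p
  set s : ℝ := Real.sqrt p with hs
  have hs_pos : 0 < s := Real.sqrt_pos.mpr hppos
  have hss : s * s = p := Real.mul_self_sqrt hppos.le
  have hs1 : s ≤ 1 := Real.sqrt_le_one.mpr hp1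
  set c : ℂ := ((s⁻¹ : ℝ) : ℂ) with hc
  have hcc : c * c = (p : ℂ)⁻¹ := by
    rw [hc, ← Complex.ofReal_mul, ← Complex.ofReal_inv]
    congr 1
    rw [← hss, mul_inv]
  -- square root of ρ
  set A : Matrix n n ℂ := posSemidefSqrt hρ with hA
  have hApsd : A.PosSemidef := posSemidefSqrt_posSemidef hρ
  have hAH : A.conjTranspose = A := hApsd.1
  have hAA : A * A = ρ := posSemidefSqrt_mul_self hρ
  set B : Matrix n n ℂ := c • (P * A) with hB
  have hBH : B.conjTranspose = c • (A * P) := by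
    rw [hB, Matrix.conjTranspose_smul, Matrix.conjTranspose_mul, hAH, hsa, hc,
      Complex.star_def, Complex.conj_ofReal]
  set σ : Matrix n n ℂ := (p : ℂ)⁻¹ • (P * ρ * P) with hσ
  have hBBH : B * B.conjTranspose = σ := by
    rw [hB, hBH, Matrix.smul_mul, Matrix.mul_smul, smul_smul, hcc, hσ]
    congr 1
    rw [← hAA]
    noncomm_ring
  -- traces
  have tAPA : (A * P * A).trace = (p : ℂ) := by
    rw [Matrix.trace_mul_cycle, hAA, Matrix.trace_mul_comm, htrP]
  have t1 : (A.conjTranspose * A).trace = 1 := by rw [hAH, hAA, htr]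
  have t2 : (A.conjTranspose * B).trace = (s : ℂ) := by
    rw [hAH, hB, Matrix.mul_smul, Matrix.trace_smul, ← mul_assoc, tAPA, hc, smul_eq_mul,
      ← Complex.ofReal_mul]
    congr 1
    rw [← hss]
    field_simp
  have t3 : (B.conjTranspose * A).trace = (s : ℂ) := by
    rw [hBH, Matrix.smul_mul, Matrix.trace_smul, tAPA, hc, smul_eq_mul, ← Complex.ofReal_mul]
    congr 1
    rw [← hss]
    field_simp
  have t4 : (B.conjTranspose * B).trace = 1 := by
    have e : B.conjTranspose * B = (c * c) • (A * P * A) := by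
      rw [hBH, hB, Matrix.smul_mul, Matrix.mul_smul, smul_smul]
      congr 1
      calc A * P * (P * A) = A * (P * P) * A := by noncomm_ring
        _ = A * P * A := by rw [hidem]
    rw [e, Matrix.trace_smul, hcc, tAPA, smul_eq_mul]
    rw [inv_mul_cancel₀ (by exact_mod_cast hppos.ne')]
  -- X and Y
  set X : Matrix n n ℂ := A - B with hX
  set Y : Matrix n n ℂ := A + B with hY
  have tX : ((X.conjTranspose * X).trace) = ((2 - 2 * s : ℝ) : ℂ) := by
    have e : X.conjTranspose * X = A.conjTranspose * A - A.conjTranspose * B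
        - B.conjTranspose * A + B.conjTranspose * B := by
      rw [hX, Matrix.conjTranspose_sub]; noncomm_ring
    rw [e, Matrix.trace_add, Matrix.trace_sub, Matrix.trace_sub, t1, t2, t3, t4]
    push_cast; ring
  have tY : ((Y.conjTranspose * Y).trace) = ((2 + 2 * s : ℝ) : ℂ) := by
    have e : Y.conjTranspose * Y = A.conjTranspose * A + A.conjTranspose * B
        + B.conjTranspose * A + B.conjTranspose * B := by
      rw [hY, Matrix.conjTranspose_add]; noncomm_ring
    rw [e, Matrix.trace_add, Matrix.trace_add, Matrix.trace_add, t1, t2, t3, t4]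
    push_cast; ring
  -- Δ is Hermitian
  set Δ : Matrix n n ℂ := ρ - σ with hΔdef
  have hσH : σ.conjTranspose = σ := by
    rw [hσ, Matrix.conjTranspose_smul, Matrix.conjTranspose_mul, Matrix.conjTranspose_mul,
      hρH, hsa]
    congr 1
    · rw [← Complex.ofReal_inv, Complex.star_def, Complex.conj_ofReal, Complex.ofReal_inv]
    · noncomm_ring
  have hΔH : Δ.IsHermitian := by
    unfold Matrix.IsHermitian
    rw [hΔdef, Matrix.conjTranspose_sub, hρH, hσH]
  obtain ⟨Q, hQH, hQc, htn⟩ := exists_dual hΔH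
  -- trace identity
  have c1 : (A.conjTranspose * (Q * A)).trace = (Q * ρ).trace := by
    rw [← mul_assoc, Matrix.trace_mul_cycle, hAH, hAA, Matrix.trace_mul_comm]
  have c2 : (B.conjTranspose * (Q * B)).trace = (Q * σ).trace := by
    rw [← mul_assoc, Matrix.trace_mul_cycle, hBBH, Matrix.trace_mul_comm]
  have hw : (B.conjTranspose * (Q * A)).trace = star ((A.conjTranspose * (Q * B)).trace) := by
    have e : (A.conjTranspose * (Q * B)).conjTranspose = B.conjTranspose * (Q * A) := by
      rw [Matrix.conjTranspose_mul, Matrix.conjTranspose_mul, Matrix.conjTranspose_conjTranspose,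
        hQH.eq, mul_assoc]
    rw [← e, Matrix.trace_conjTranspose]
  have expand : X.conjTranspose * (Q * Y) = A.conjTranspose * (Q * A) + A.conjTranspose * (Q * B)
      - B.conjTranspose * (Q * A) - B.conjTranspose * (Q * B) := by
    rw [hX, hY, Matrix.conjTranspose_sub]
    noncomm_ring
  have main : ((Q * Δ).trace).re = ((X.conjTranspose * (Q * Y)).trace).re := by
    have lhs : (Q * Δ).trace = (Q * ρ).trace - (Q * σ).trace := by
      rw [hΔdef, Matrix.mul_sub, Matrix.trace_sub]
    have rhs : (X.conjTranspose * (Q * Y)).trace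
        = (Q * ρ).trace - (Q * σ).trace
          + ((A.conjTranspose * (Q * B)).trace - star ((A.conjTranspose * (Q * B)).trace)) := by
      rw [expand, Matrix.trace_sub, Matrix.trace_sub, Matrix.trace_add, c1, c2, hw]
      ring
    rw [lhs, rhs]
    simp [Complex.add_re, Complex.sub_re, Complex.conj_re]
  -- contraction step
  have hQY : (((Q * Y).conjTranspose * (Q * Y)).trace).re ≤ ((Y.conjTranspose * Y).trace).re := by
    have e1 : Y.conjTranspose * Y - (Q * Y).conjTranspose * (Q * Y)
        = Y.conjTranspose * (1 - Q * Q) * Y := by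
      rw [Matrix.conjTranspose_mul, hQH.eq]
      noncomm_ring
    have e2 := trace_psd_re_nonneg _ (hQc.conjTranspose_mul_mul_same Y)
    rw [← e1, Matrix.trace_sub, Complex.sub_re] at e2
    linarith
  -- Cauchy-Schwarz
  have hCS := trace_CS X (Q * Y)
  have hXv : ((X.conjTranspose * X).trace).re = 2 - 2 * s := by rw [tX, Complex.ofReal_re]
  have hYv : ((Y.conjTranspose * Y).trace).re = 2 + 2 * s := by rw [tY, Complex.ofReal_re]
  have hbound : ((Q * Δ).trace).re ≤ 2 * Real.sqrt (1 - p) := by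
    have h1 : Real.sqrt (((Q * Y).conjTranspose * (Q * Y)).trace).re
        ≤ Real.sqrt (2 + 2 * s) := by
      rw [← hYv]
      exact Real.sqrt_le_sqrt hQY
    have h2 : ((Q * Δ).trace).re ≤ Real.sqrt (2 - 2 * s) * Real.sqrt (2 + 2 * s) := by
      rw [main]
      calc ((X.conjTranspose * (Q * Y)).trace).re
          ≤ Real.sqrt (((X.conjTranspose * X).trace).re)
            * Real.sqrt ((((Q * Y).conjTranspose * (Q * Y)).trace).re) := hCS
        _ ≤ Real.sqrt (2 - 2 * s) * Real.sqrt (2 + 2 * s) := by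
            rw [hXv]
            exact mul_le_mul_of_nonneg_left h1 (Real.sqrt_nonneg _)
    have h3 : Real.sqrt (2 - 2 * s) * Real.sqrt (2 + 2 * s) = 2 * Real.sqrt (1 - p) := by
      rw [← Real.sqrt_mul (by linarith)]
      have : (2 - 2 * s) * (2 + 2 * s) = 4 * (1 - p) := by
        have : s * s = p := hss
        nlinarith
      rw [this, Real.sqrt_mul (by norm_num),
        show Real.sqrt 4 = 2 by
          rw [show (4:ℝ) = 2 ^ 2 by norm_num, Real.sqrt_sq (by norm_num)]]
    linarith [h3 ▸ h2]
  -- conclude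
  have hgoal : traceNorm (ρ - ((p : ℂ)⁻¹ • (P * ρ * P))) = traceNorm Δ := by rw [hΔdef, hσ]
  rw [hgoal, htn]
  linarith
end

section
/- Let N : L(H_A) → L(H_B) be a completely positive trace-preserving map whose Hilbert–Schmidt adjoint N† satisfies N†(Π_B) ≥ Π_A, where Π_A and Π_B are the group-average projectors of finite groups represented on A and B respectively. If σ_A is a density operator with σ_A = Π_A σ_A Π_A, then N(σ_A) satisfies N(σ_A) = Π_B N(σ_A) Π_B. -/
open ComplexOrder Matrix

lemma psd_trace_nonneg' {n : Type*} [Fintype n] [DecidableEq n] {M : Matrix n n ℂ} (h : M.PosSemidef) :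
    0 ≤ M.trace := by
  rw [Matrix.trace]
  refine Finset.sum_nonneg fun i _ => ?_
  exact h.diag_nonneg

lemma trace_ctms_zero {m n : Type*} [Fintype m] [Fintype n]
    {C : Matrix m n ℂ} (h : (Cᴴ * C).trace = 0) : C = 0 := by
  have hsum : (∑ j : n, ∑ i : m, star (C i j) * C i j) = 0 := by
    simpa [Matrix.trace, Matrix.diag, Matrix.mul_apply, Matrix.conjTranspose_apply] using h
  ext i j
  have h1 := (Finset.sum_eq_zero_iff_of_nonneg
    (fun j _ => Finset.sum_nonneg fun i _ => star_mul_self_nonneg (C i j))).mp hsum j (Finset.mem_univ j)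
  have h2 := (Finset.sum_eq_zero_iff_of_nonneg
    (fun i _ => star_mul_self_nonneg (C i j))).mp h1 i (Finset.mem_univ i)
  rcases mul_eq_zero.mp h2 with h3 | h3
  · simpa using congrArg star h3
  · exact h3

open scoped MatrixOrder in
lemma trace_psd_mul_nonneg {n : Type*} [Fintype n] [DecidableEq n]
    {M S : Matrix n n ℂ} (hM : M.PosSemidef) (hS : S.PosSemidef) :
    0 ≤ (M * S).trace := by
  have hs := CFC.sqrt_mul_sqrt_self S hS.nonneg
  have hsh : (CFC.sqrt S)ᴴ = CFC.sqrt S := (CFC.sqrt_nonneg S).posSemidef.1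
  have key : ((CFC.sqrt S)ᴴ * M * CFC.sqrt S).trace = (M * S).trace := by
    rw [hsh, Matrix.trace_mul_comm, ← Matrix.mul_assoc, hs]
    exact Matrix.trace_mul_comm S M
  rw [← key]
  exact psd_trace_nonneg' (hM.conjTranspose_mul_mul_same (CFC.sqrt S))

open scoped MatrixOrder in
lemma psd_mul_proj_zero {n : Type*} [Fintype n] [DecidableEq n]
    {ρ Q : Matrix n n ℂ} (hρ : ρ.PosSemidef) (hQ : Qᴴ = Q)
    (h : (Q * ρ * Q).trace = 0) : ρ * Q = 0 := by
  have hs := CFC.sqrt_mul_sqrt_self ρ hρ.nonneg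
  have hsh : (CFC.sqrt ρ)ᴴ = CFC.sqrt ρ := (CFC.sqrt_nonneg ρ).posSemidef.1
  have hC : (CFC.sqrt ρ * Q)ᴴ * (CFC.sqrt ρ * Q) = Q * ρ * Q := by
    rw [Matrix.conjTranspose_mul, hsh, hQ]
    calc Q * CFC.sqrt ρ * (CFC.sqrt ρ * Q) = Q * (CFC.sqrt ρ * CFC.sqrt ρ) * Q := by noncomm_ring
      _ = Q * ρ * Q := by rw [hs]
  have hz : CFC.sqrt ρ * Q = 0 := trace_ctms_zero (by rw [hC]; exact h)
  calc ρ * Q = CFC.sqrt ρ * (CFC.sqrt ρ * Q) := by rw [← Matrix.mul_assoc, hs]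
    _ = 0 := by rw [hz, Matrix.mul_zero]


/-- A linear map between matrix algebras is completely positive if all its
ancilla-extensions `N ⊗ id_k` preserve positive semi-definiteness. -/
def IsCompletelyPositive {A B : Type*} [Fintype A] [DecidableEq A]
    [Fintype B] [DecidableEq B]
    (N : Matrix A A ℂ →ₗ[ℂ] Matrix B B ℂ) : Prop :=
  ∀ (k : ℕ) (X : Matrix (A × Fin k) (A × Fin k) ℂ), X.PosSemidef →
    (Matrix.of fun (bi bj : B × Fin k) =>
      N (Matrix.of fun a a' => X (a, bi.2) (a', bj.2)) bi.1 bj.1).PosSemidef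

/-- If a quantum channel `N` satisfies `N†(P_B) ≥ P_A` for
orthogonal projections `P_A, P_B`, then `N` maps Bose-symmetric states to
Bose-symmetric states: `σ = P_A σ P_A` implies `N(σ) = P_B N(σ) P_B`. -/
theorem bose_symmetric_channel_preserves_bose_symmetry
    {A B : Type*} [Fintype A] [DecidableEq A] [Fintype B] [DecidableEq B]
    (N : Matrix A A ℂ →ₗ[ℂ] Matrix B B ℂ)
    (hCP : IsCompletelyPositive N)
    (hTP : ∀ X, (N X).trace = X.trace)
    (Nadj : Matrix B B ℂ →ₗ[ℂ] Matrix A A ℂ)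
    (hadj : ∀ (X : Matrix B B ℂ) (Y : Matrix A A ℂ),
      (X.conjTranspose * N Y).trace = ((Nadj X).conjTranspose * Y).trace)
    (PA : Matrix A A ℂ) (PB : Matrix B B ℂ)
    (hPA : PA * PA = PA ∧ PA.conjTranspose = PA)
    (hPB : PB * PB = PB ∧ PB.conjTranspose = PB)
    (hord : (Nadj PB - PA).PosSemidef)
    (σ : Matrix A A ℂ) (hσ : σ.PosSemidef) (htr : σ.trace = 1)
    (hσsym : σ = PA * σ * PA) :
    N σ = PB * N σ * PB := by
  have hS : (N σ).PosSemidef := by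
    have hX : (σ.submatrix (Prod.fst : A × Fin 1 → A) Prod.fst).PosSemidef :=
      hσ.submatrix _
    have h2 := (hCP 1 _ hX).submatrix (fun b : B => (b, (0 : Fin 1)))
    exact h2
  set S := N σ with hSdef
  have hPAσ : PA * σ = σ := by
    conv_lhs => rw [hσsym]
    rw [← Matrix.mul_assoc, ← Matrix.mul_assoc, hPA.1, ← hσsym]
  have trS : S.trace = 1 := by rw [hSdef, hTP]; exact htr
  have hNadjH : (Nadj PB)ᴴ = Nadj PB := by
    have h1 : (Nadj PB - PA)ᴴ = Nadj PB - PA := hord.1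
    calc (Nadj PB)ᴴ = (Nadj PB - PA)ᴴ + PAᴴ := by rw [Matrix.conjTranspose_sub]; abel
      _ = Nadj PB := by rw [h1, hPA.2]; abel
  set t := ((Nadj PB - PA) * σ).trace with htdef
  have eq1 : (PB * S).trace = (Nadj PB * σ).trace := by
    have h := hadj PB σ
    rwa [hPB.2, hNadjH] at h
  have eq2 : (Nadj PB * σ).trace = t + 1 := by
    have hsplit : Nadj PB * σ = (Nadj PB - PA) * σ + PA * σ := by
      rw [Matrix.sub_mul]; abel
    rw [hsplit, Matrix.trace_add, hPAσ, htr, htdef]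
  set Q := (1 : Matrix B B ℂ) - PB with hQdef
  have hQH : Qᴴ = Q := by
    rw [hQdef, Matrix.conjTranspose_sub, Matrix.conjTranspose_one, hPB.2]
  have hQidem : Q * Q = Q := by
    rw [hQdef, Matrix.mul_sub, Matrix.sub_mul, Matrix.sub_mul, hPB.1]
    simp
  have tr1 : (Q * S * Q).trace = (Q * S).trace := by
    rw [Matrix.trace_mul_comm, ← Matrix.mul_assoc, hQidem]
  have tr2 : (Q * S).trace = -t := by
    have hQS : Q * S = S - PB * S := by rw [hQdef, Matrix.sub_mul, Matrix.one_mul]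
    rw [hQS, Matrix.trace_sub, trS, eq1, eq2]; ring
  have ht0 : t = 0 := by
    have htnn : 0 ≤ t := trace_psd_mul_nonneg hord hσ
    have hpsd : (Q * S * Q).PosSemidef := by
      have := hS.conjTranspose_mul_mul_same Q
      rwa [hQH] at this
    have h0 : 0 ≤ -t := by rw [← tr2, ← tr1]; exact psd_trace_nonneg' hpsd
    exact le_antisymm (neg_nonneg.mp h0) htnn
  have hSQ : S * Q = 0 :=
    psd_mul_proj_zero hS hQH (by rw [tr1, tr2, ht0, neg_zero])
  have h5 : S * PB = S := by
    rw [hQdef, Matrix.mul_sub, Matrix.mul_one] at hSQ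
    exact (sub_eq_zero.mp hSQ).symm
  have h6 : Q * S = 0 := by
    have h := congrArg Matrix.conjTranspose hSQ
    rwa [Matrix.conjTranspose_mul, hQH, hS.1, Matrix.conjTranspose_zero] at h
  have h7 : PB * S = S := by
    rw [hQdef, Matrix.sub_mul, Matrix.one_mul] at h6
    exact (sub_eq_zero.mp h6).symm
  rw [h7, h5]
end
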